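/- Let l ∈ ℝ, κ > 0, m ∈ ℝ, let g be the de Sitter metric on ℝ⁴ and K = diag(0, e^{2lt}, e^{2lt}, e^{2lt}). The vector field Υ₀ whose only nonzero component is Υ₀^t(t) = e^{lt/2}(1 + (m²/κ)e^{lt})^{−1/2} satisfies (L_{Υ₀} g)_{μν} = 2Ω(g_{μν} + (m²/κ)K_{μν}) at every point, with Ω(t) = (l/2)·e^{lt/2}·(1 + (m²/κ)e^{lt})^{−3/2}. -/

import Mathlib

/-- Partial derivative of a scalar function on ℝ^N in the i-th coordinate direction. -/
noncomputable def pd {N : ℕ} (f : (Fin N → ℝ) → ℝ) (i : Fin N) (x : Fin N → ℝ) : ℝ :=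
  fderiv ℝ f x (Pi.single i 1)

/-- Lie derivative of a covariant 2-tensor field `T` along the vector field `V`. -/
noncomputable def lieD {N : ℕ} (V : (Fin N → ℝ) → Fin N → ℝ)
    (T : (Fin N → ℝ) → Fin N → Fin N → ℝ) (x : Fin N → ℝ) (μ ν : Fin N) : ℝ :=
  ∑ σ, (V x σ * pd (fun y => T y μ ν) σ x
    + T x σ ν * pd (fun y => V y σ) μ x
    + T x μ σ * pd (fun y => V y σ) ν x)

/-- de Sitter metric g = diag(−1, e^{lt}, e^{lt}, e^{lt}) on ℝ⁴, coordinate 0 being t. -/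
noncomputable def dsMetric (l : ℝ) (x : Fin 4 → ℝ) (μ ν : Fin 4) : ℝ :=
  if μ = ν then (if μ = 0 then -1 else Real.exp (l * x 0)) else 0

/-- The Killing tensor K = diag(0, e^{2lt}, e^{2lt}, e^{2lt}) of the de Sitter metric. -/
noncomputable def dsK (l : ℝ) (x : Fin 4 → ℝ) (μ ν : Fin 4) : ℝ :=
  if μ = ν ∧ μ ≠ 0 then Real.exp (2 * l * x 0) else 0

set_option maxHeartbeats 1000000

lemma pd_comp0 (f : ℝ → ℝ) (d : ℝ) (t : Fin 4 → ℝ) (hfd : HasDerivAt f d (t 0)) (i : Fin 4) :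
    pd (fun y => f (y 0)) i t = if i = 0 then d else 0 := by
  have h1 : HasFDerivAt (fun y : Fin 4 → ℝ => f (y 0))
      (((1 : ℝ →L[ℝ] ℝ).smulRight d).comp (ContinuousLinearMap.proj 0)) t :=
    hfd.hasFDerivAt.comp t ((ContinuousLinearMap.proj (R := ℝ) (φ := fun _ : Fin 4 => ℝ) 0).hasFDerivAt)
  rw [pd, h1.fderiv]
  rcases eq_or_ne i 0 with h | h
  · simp [h, Pi.single_apply]
  · simp [h, Pi.single_apply, (Ne.symm h)]

lemma pd_const (c : ℝ) (i : Fin 4) (x : Fin 4 → ℝ) : pd (fun _ => c) i x = 0 := by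
  simp [pd]

theorem stmt9 (l κ₀ m : ℝ) (hκ : 0 < κ₀)
    (Υ₀ : (Fin 4 → ℝ) → Fin 4 → ℝ)
    (hΥ₀ : Υ₀ = fun x μ => if μ = 0 then
        Real.exp (l * x 0 / 2) * (1 + m ^ 2 / κ₀ * Real.exp (l * x 0)) ^ (-(1 / 2) : ℝ)
      else 0)
    (Ω : ℝ → ℝ)
    (hΩ : Ω = fun t =>
      (l / 2) * Real.exp (l * t / 2) * (1 + m ^ 2 / κ₀ * Real.exp (l * t)) ^ (-(3 / 2) : ℝ)) :
    ∀ x : Fin 4 → ℝ, ∀ μ ν : Fin 4,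
      lieD Υ₀ (dsMetric l) x μ ν
        = 2 * Ω (x 0) * (dsMetric l x μ ν + m ^ 2 / κ₀ * dsK l x μ ν) := by
  subst hΥ₀ hΩ
  have ha0 : 0 ≤ m ^ 2 / κ₀ := div_nonneg (sq_nonneg m) hκ.le
  have hu : ∀ t : ℝ, 0 < 1 + m ^ 2 / κ₀ * Real.exp (l * t) := by
    intro t; positivity
  have key : ∀ t : ℝ, (1 + m ^ 2 / κ₀ * Real.exp (l * t)) ^ (-(1 / 2) : ℝ)
      = (1 + m ^ 2 / κ₀ * Real.exp (l * t))
        * (1 + m ^ 2 / κ₀ * Real.exp (l * t)) ^ (-(3 / 2) : ℝ) := by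
    intro t
    rw [show (-(1 / 2) : ℝ) = 1 + -(3 / 2) by norm_num, Real.rpow_add (hu t), Real.rpow_one]
  have hE : ∀ t : ℝ, HasDerivAt (fun s => Real.exp (l * s)) (l * Real.exp (l * t)) t := by
    intro t
    simpa [mul_comm] using ((hasDerivAt_id t).const_mul l).exp
  have hE2 : ∀ t : ℝ, HasDerivAt (fun s => Real.exp (l * s / 2))
      (l / 2 * Real.exp (l * t / 2)) t := by
    intro t
    have h : HasDerivAt (fun s : ℝ => l * s / 2) (l / 2) t := by
      simpa using (((hasDerivAt_id t).const_mul l).div_const 2)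
    simpa [mul_comm] using h.exp
  have hf : ∀ t : ℝ, HasDerivAt
      (fun s => Real.exp (l * s / 2) * (1 + m ^ 2 / κ₀ * Real.exp (l * s)) ^ (-(1 / 2) : ℝ))
      ((l / 2) * Real.exp (l * t / 2) * (1 + m ^ 2 / κ₀ * Real.exp (l * t)) ^ (-(3 / 2) : ℝ)) t := by
    intro t
    have hU : HasDerivAt (fun s : ℝ => 1 + m ^ 2 / κ₀ * Real.exp (l * s))
        (m ^ 2 / κ₀ * (l * Real.exp (l * t))) t := ((hE t).const_mul _).const_add 1
    have hP : HasDerivAt (fun s : ℝ => (1 + m ^ 2 / κ₀ * Real.exp (l * s)) ^ (-(1 / 2) : ℝ))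
        (m ^ 2 / κ₀ * (l * Real.exp (l * t)) * (-(1 / 2))
          * (1 + m ^ 2 / κ₀ * Real.exp (l * t)) ^ ((-(1 / 2) : ℝ) - 1)) t :=
      hU.rpow_const (Or.inl (hu t).ne')
    have := (hE2 t).mul hP
    refine this.congr_deriv ?_
    rw [show ((-(1 / 2) : ℝ) - 1) = -(3 / 2) by norm_num, key t]
    ring
  intro x μ ν
  have pdExp : ∀ i, pd (fun y => Real.exp (l * y 0)) i x
      = if i = 0 then l * Real.exp (l * x 0) else 0 :=
    fun i => pd_comp0 _ _ x (hE (x 0)) i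
  have pdF : ∀ i, pd (fun y =>
      Real.exp (l * y 0 / 2) * (1 + m ^ 2 / κ₀ * Real.exp (l * y 0)) ^ (-(1 / 2) : ℝ)) i x
      = if i = 0 then
          (l / 2) * Real.exp (l * x 0 / 2)
            * (1 + m ^ 2 / κ₀ * Real.exp (l * x 0)) ^ (-(3 / 2) : ℝ)
        else 0 :=
    fun i => pd_comp0 _ _ x (hf (x 0)) i
  have key' := key (x 0)
  simp at pdF key'
  have hexp2 : Real.exp (2 * l * x 0) = Real.exp (l * x 0) * Real.exp (l * x 0) := by
    rw [← Real.exp_add]; ring_nf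
  fin_cases μ <;> fin_cases ν <;>
    simp only [lieD, dsMetric, dsK, Fin.sum_univ_four, Fin.isValue] <;>
    simp [pd_const, pdExp, pdF, hexp2, key'] <;>
    ring
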